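/- arXiv:1701.08276 — 5 statements merged into one kernel-verified Lean document; each statement's English description precedes it below -/
import Mathlib

section
/- If L = (l_1,...,l_n) is a positive continuous function from C^n to R_+^n belonging to the class Q^n, then for every j in {1,...,n} and every fixed point z* in C^n, the quantity |z_j| · l_j(z* + z_j e_j) tends to infinity as |z_j| tends to infinity. -/
open Filter

/-- The class `Q^n`: for every nonnegative radius vector `R` and every index `j`,
`0 < λ_{1,j}(R) ≤ λ_{2,j}(R) < ∞`, expressed via uniform lower/upper bounds for
the ratios `l_j z / l_j z⁰` over the closed polydisc `D^n[z⁰, R / L z⁰]`. -/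
def inQn {n : ℕ} (L : (Fin n → ℂ) → Fin n → ℝ) : Prop :=
  ∀ R : Fin n → ℝ, (∀ j, 0 ≤ R j) → ∀ j : Fin n,
    ∃ m M : ℝ, 0 < m ∧
      ∀ z0 z : Fin n → ℂ, (∀ k, ‖z k - z0 k‖ ≤ R k / L z0 k) →
        m ≤ L z j / L z0 j ∧ L z j / L z0 j ≤ M

/-- If `L ∈ Q^n` then for every `j` and fixed `z* ∈ ℂ^n`,
`|z_j| · l_j (z* + z_j e_j) → ∞` as `|z_j| → ∞`. -/
theorem stmt0 {n : ℕ} (L : (Fin n → ℂ) → Fin n → ℝ)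
    (hpos : ∀ z j, 0 < L z j) (hcont : Continuous L)
    (hQ : inQn L) (j : Fin n) (zstar : Fin n → ℂ) :
    Tendsto (fun w : ℂ => ‖w‖ * L (fun k => zstar k + if k = j then w else 0) j)
      (comap (fun w : ℂ => ‖w‖) atTop) atTop := by
  rw [tendsto_atTop]
  intro C
  set c := L zstar j with hcdef
  have hc : 0 < c := hpos zstar j
  set C' := max C 1 with hC'
  have hC'1 : (1:ℝ) ≤ C' := le_max_right _ _
  have hC'0 : (0:ℝ) < C' := lt_of_lt_of_le one_pos hC'1
  obtain ⟨m, M, hm, hmm⟩ := hQ (fun k => if k = j then C' else 0)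
    (by intro k; by_cases h : k = j <;> simp [h, le_of_lt hC'0]) j
  have hM1 : (1:ℝ) ≤ M := by
    have h := (hmm zstar zstar (by
      intro k
      simp only [sub_self, map_zero]
      by_cases h : k = j <;> simp [h] <;> positivity)).2
    rwa [div_self (ne_of_gt (hpos zstar j))] at h
  have hM0 : (0:ℝ) < M := lt_of_lt_of_le one_pos hM1
  have key : ∀ w : ℂ, C' * M / c < ‖w‖ →
      C ≤ ‖w‖ * L (fun k => zstar k + if k = j then w else 0) j := by
    intro w hw
    set zw : Fin n → ℂ := fun k => zstar k + if k = j then w else 0 with hzw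
    set ℓ := L zw j with hℓ
    have hℓ0 : 0 < ℓ := hpos zw j
    by_cases hcase : C' ≤ ‖w‖ * ℓ
    · exact le_trans (le_max_left _ _) hcase
    · push_neg at hcase
      have habs : ∀ k, ‖zstar k - zw k‖ ≤
          (if k = j then C' else 0) / L zw k := by
        intro k
        by_cases h : k = j
        · subst h
          have he : zstar k - zw k = -w := by simp [hzw]
          rw [he, norm_neg, if_pos rfl, le_div_iff₀ hℓ0]
          exact le_of_lt hcase
        · have : zstar k - zw k = 0 := by simp [hzw, h]
          rw [this, norm_zero, if_neg h, zero_div]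
      have h2 := (hmm zw zstar habs).2
      -- c / ℓ ≤ M, so ℓ ≥ c / M
      have hℓge : c / M ≤ ℓ := by
        rw [div_le_iff₀ hℓ0] at h2
        rw [div_le_iff₀ hM0]
        linarith [h2]
      have h3 : C' < ‖w‖ * (c / M) := by
        rw [div_lt_iff₀ hc] at hw
        rw [← mul_div_assoc, lt_div_iff₀ hM0]
        linarith
      have : C' < ‖w‖ * ℓ := by
        calc C' < ‖w‖ * (c / M) := h3
          _ ≤ ‖w‖ * ℓ := by
            apply mul_le_mul_of_nonneg_left hℓge (norm_nonneg w)
      linarith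
  rw [eventually_comap]
  filter_upwards [eventually_gt_atTop (C' * M / c)] with t ht w hwt
  exact key w (hwt ▸ ht)
end

section
/- Let l_j : C^n → C and all partial derivatives ∂l_j/∂z_m be continuous on C^n for all j, m ∈ {1,...,n}. If there are constants P > 0 and c > 0 with (1/(c+|l_j(z)|)) · |∂l_j(z)/∂z_m| ≤ P for all z ∈ C^n and all j, m, then the function L*(z) = (c+|l_1(z)|, ..., c+|l_n(z)|) belongs to the class Q^n; moreover λ_{2,j}(R) ≤ exp((P/c)(r_1+...+r_n)) and λ_{1,j}(R) ≥ exp(−(P/c)(r_1+...+r_n)) for all R = (r_1,...,r_n). -/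
/-- Partial derivative `∂f/∂z_m` of a function `f : ℂ^n → ℂ`. -/
noncomputable def pd {n : ℕ} (m : Fin n) (f : (Fin n → ℂ) → ℂ) : (Fin n → ℂ) → ℂ :=
  fun z => deriv (fun w => f (Function.update z m w)) (z m)

open Real Finset

lemma pd_eq_fderiv' {n : ℕ} (f : (Fin n → ℂ) → ℂ) (hf : Differentiable ℂ f) (m : Fin n)
    (z : Fin n → ℂ) :
    deriv (fun w => f (Function.update z m w)) (z m) = fderiv ℂ f z (Pi.single m 1) := by
  have h2 := hasDerivAt_update z m (z m)
  have h3 : HasFDerivAt f (fderiv ℂ f z) (Function.update z m (z m)) := by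
    rw [Function.update_eq_self]; exact (hf z).hasFDerivAt
  exact (h3.comp_hasDerivAt (z m) h2).deriv

lemma gb_eq (δ K c : ℝ) : gronwallBound δ K (K * c) 1 = (δ + c) * Real.exp K - c := by
  unfold gronwallBound
  split_ifs with h
  · simp [h]
  · field_simp
    ring

lemma key {n : ℕ} (f : (Fin n → ℂ) → ℂ) (hf : Differentiable ℂ f)
    (P c : ℝ) (hP : 0 ≤ P) (hcpos : 0 < c)
    (hbd : ∀ z m, ‖pd m f z‖ ≤ P * (c + ‖f z‖))
    (w0 w1 : Fin n → ℂ) (S : ℝ) (hS : ∑ m, ‖w1 m - w0 m‖ ≤ S) :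
    c + ‖f w1‖ ≤ (c + ‖f w0‖) * Real.exp (P * S) := by
  have hS0 : 0 ≤ S := le_trans (Finset.sum_nonneg fun m _ => norm_nonneg _) hS
  set K := P * S with hKdef
  have hK0 : 0 ≤ K := mul_nonneg hP hS0
  set γ : ℝ → (Fin n → ℂ) := fun t => w0 + t • (w1 - w0) with hγ
  have hγd : ∀ t : ℝ, HasDerivAt γ (w1 - w0) t := by
    intro t
    simpa [hγ] using ((hasDerivAt_id t).smul_const (w1 - w0)).const_add w0
  have hF : ∀ t : ℝ, HasDerivAt (fun t => f (γ t)) (fderiv ℂ f (γ t) (w1 - w0)) t := by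
    intro t
    exact (((hf (γ t)).hasFDerivAt.restrictScalars ℝ).comp_hasDerivAt t (hγd t))
  have hbound : ∀ t : ℝ, ‖fderiv ℂ f (γ t) (w1 - w0)‖ ≤ K * ‖f (γ t)‖ + K * c := by
    intro t
    have hv : (w1 - w0) = ∑ m, (w1 m - w0 m) • (Pi.single m (1:ℂ) : Fin n → ℂ) := by
      rw [pi_eq_sum_univ (w1 - w0)]
      refine Finset.sum_congr rfl fun m _ => ?_
      congr 1
      ext j
      simp [Pi.single_apply, eq_comm]
    calc ‖fderiv ℂ f (γ t) (w1 - w0)‖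
        = ‖∑ m, (w1 m - w0 m) • fderiv ℂ f (γ t) (Pi.single m 1)‖ := by
          rw [hv, map_sum]
          simp
      _ ≤ ∑ m, ‖(w1 m - w0 m) • fderiv ℂ f (γ t) (Pi.single m 1)‖ := norm_sum_le _ _
      _ = ∑ m, ‖w1 m - w0 m‖ * ‖pd m f (γ t)‖ := by
          refine Finset.sum_congr rfl fun m _ => ?_
          rw [norm_smul, ← pd_eq_fderiv' f hf m (γ t)]
          simp [pd]
      _ ≤ ∑ m, ‖w1 m - w0 m‖ * (P * (c + ‖f (γ t)‖)) := by
          refine Finset.sum_le_sum fun m _ => ?_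
          exact mul_le_mul_of_nonneg_left (hbd (γ t) m) (norm_nonneg _)
      _ = (∑ m, ‖w1 m - w0 m‖) * (P * (c + ‖f (γ t)‖)) := by
          rw [← Finset.sum_mul]
      _ ≤ S * (P * (c + ‖f (γ t)‖)) := by
          refine mul_le_mul_of_nonneg_right hS ?_
          positivity
      _ = K * ‖f (γ t)‖ + K * c := by
          rw [hKdef]; ring
  have hcont : ContinuousOn (fun t => f (γ t)) (Set.Icc (0:ℝ) 1) :=
    (hf.continuous.comp (continuous_const.add (continuous_id.smul continuous_const))).continuousOn
  have := norm_le_gronwallBound_of_norm_deriv_right_le (f := fun t => f (γ t))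
    (f' := fun t => fderiv ℂ f (γ t) (w1 - w0)) (δ := ‖f (γ 0)‖) (K := K) (ε := K * c)
    (a := 0) (b := 1) hcont (fun t _ => (hF t).hasDerivWithinAt) le_rfl
    (fun t _ => hbound t) 1 (by norm_num)
  norm_num [gb_eq] at this
  have h0 : γ 0 = w0 := by simp [hγ]
  have h1 : γ 1 = w1 := by simp [hγ]
  rw [h0, h1] at this
  linarith [this]

/-- If `l_j : ℂ^n → ℂ` and all `∂l_j/∂z_m` are continuous, and
`|∂l_j(z)/∂z_m| / (c + |l_j(z)|) ≤ P` for all `z, j, m`, then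
`L*(z) = (c+|l_1(z)|,…,c+|l_n(z)|) ∈ Q^n`; moreover
`λ_{2,j}(R) ≤ exp((P/c)·(r_1+⋯+r_n))` and `λ_{1,j}(R) ≥ exp(−(P/c)·(r_1+⋯+r_n))`. -/
theorem stmt1 {n : ℕ} (l : Fin n → (Fin n → ℂ) → ℂ)
    (hdiff : ∀ j, Differentiable ℂ (l j))
    (hc : ∀ j, Continuous (l j)) (hdc : ∀ j m, Continuous (pd m (l j)))
    (P c : ℝ) (hP : 0 < P) (hcpos : 0 < c)
    (hbd : ∀ z j m, (1 / (c + ‖l j z‖)) * ‖pd m (l j) z‖ ≤ P)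
    (Lstar : (Fin n → ℂ) → Fin n → ℝ)
    (hL : ∀ z j, Lstar z j = c + ‖l j z‖) :
    inQn Lstar ∧
    ∀ R : Fin n → ℝ, (∀ j, 0 ≤ R j) → ∀ j : Fin n,
      ∀ z0 z : Fin n → ℂ, (∀ k, ‖z k - z0 k‖ ≤ R k / Lstar z0 k) →
        Real.exp (-(P / c) * ∑ k, R k) ≤ Lstar z j / Lstar z0 j ∧
        Lstar z j / Lstar z0 j ≤ Real.exp ((P / c) * ∑ k, R k) := by
  have hbd' : ∀ j z m, ‖pd m (l j) z‖ ≤ P * (c + ‖l j z‖) := by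
    intro j z m
    have hpos : 0 < c + ‖l j z‖ := by positivity
    have h := hbd z j m
    rw [one_div, inv_mul_le_iff₀ hpos] at h
    linarith
  have H : ∀ R : Fin n → ℝ, (∀ j, 0 ≤ R j) → ∀ j : Fin n,
      ∀ z0 z : Fin n → ℂ, (∀ k, ‖z k - z0 k‖ ≤ R k / Lstar z0 k) →
        Real.exp (-(P / c) * ∑ k, R k) ≤ Lstar z j / Lstar z0 j ∧
        Lstar z j / Lstar z0 j ≤ Real.exp ((P / c) * ∑ k, R k) := by
    intro R hR j z0 z hz
    have hsum : ∑ k, ‖z k - z0 k‖ ≤ (∑ k, R k) / c := by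
      rw [Finset.sum_div]
      refine Finset.sum_le_sum fun k _ => (hz k).trans ?_
      rw [hL]
      have h1 := norm_nonneg (l k z0)
      have h2 := hR k
      gcongr
      linarith
    have hsum' : ∑ k, ‖z0 k - z k‖ ≤ (∑ k, R k) / c := by
      refine le_trans (le_of_eq ?_) hsum
      exact Finset.sum_congr rfl fun k _ => (norm_sub_rev _ _)
    have hKe : P * ((∑ k, R k) / c) = (P / c) * ∑ k, R k := by ring
    have hup := key (l j) (hdiff j) P c hP.le hcpos (hbd' j) z0 z _ hsum
    have hdown := key (l j) (hdiff j) P c hP.le hcpos (hbd' j) z z0 _ hsum'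
    rw [hKe] at hup hdown
    have hA0 : 0 < Lstar z0 j := by rw [hL]; positivity
    have hA : 0 < Lstar z j := by rw [hL]; positivity
    rw [← hL z0 j, ← hL z j] at hup hdown
    constructor
    · rw [neg_mul, Real.exp_neg, le_div_iff₀ hA0, inv_mul_le_iff₀ (Real.exp_pos _)]
      linarith
    · rw [div_le_iff₀ hA0]
      linarith
  exact ⟨fun R hR j => ⟨_, _, Real.exp_pos (-(P / c) * ∑ k, R k),
    fun z0 z hz => H R hR j z0 z hz⟩, H⟩
end

section
/- The function l(z) = |e^z| + 1 on C belongs to the class Q^1 but not to the class K^1. -/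
/-- The class `Q^1`: `0 < λ₁(r) ≤ λ₂(r) < ∞` for every `r ≥ 0`. -/
def inQ1 (l : ℂ → ℝ) : Prop :=
  ∀ r : ℝ, 0 ≤ r → ∃ m M : ℝ, 0 < m ∧
    ∀ z0 z : ℂ, ‖z - z0‖ ≤ r / l z0 → m ≤ l z / l z0 ∧ l z / l z0 ≤ M

/-- The class `K^1`: there is `c > 0` with `l(r e^{iθ₂}) / l(r e^{iθ₁}) ≤ c`
for all `r > 0` and `θ₁, θ₂ ∈ [0, 2π]`. -/
def inK1 (l : ℂ → ℝ) : Prop :=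
  ∃ c : ℝ, 0 < c ∧ ∀ r : ℝ, 0 < r → ∀ θ₁ θ₂ : ℝ,
    θ₁ ∈ Set.Icc (0:ℝ) (2 * Real.pi) → θ₂ ∈ Set.Icc (0:ℝ) (2 * Real.pi) →
    l ((r : ℂ) * Complex.exp ((θ₂ : ℂ) * Complex.I)) /
      l ((r : ℂ) * Complex.exp ((θ₁ : ℂ) * Complex.I)) ≤ c

/-- The function `l(z) = |e^z| + 1` belongs to `Q^1` but not to `K^1`. -/
theorem stmt5 :
    inQ1 (fun z : ℂ => ‖Complex.exp z‖ + 1) ∧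
    ¬ inK1 (fun z : ℂ => ‖Complex.exp z‖ + 1) := by
  constructor
  · intro r hr
    refine ⟨Real.exp (-r), Real.exp r, Real.exp_pos _, ?_⟩
    intro z0 z hz
    simp only [Complex.norm_exp] at hz ⊢
    have hb0 : (0:ℝ) < Real.exp z0.re + 1 := by positivity
    have hb1 : (1:ℝ) ≤ Real.exp z0.re + 1 := by
      have := (Real.exp_pos z0.re).le; linarith
    have hre : |z.re - z0.re| ≤ r := by
      have h1 : |(z - z0).re| ≤ ‖z - z0‖ := Complex.abs_re_le_norm _
      have h2 : r / (Real.exp z0.re + 1) ≤ r := div_le_self hr hb1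
      simpa [Complex.sub_re] using h1.trans (hz.trans h2)
    have hle : z.re ≤ z0.re + r := by
      have := abs_le.mp hre; linarith
    have hge : z0.re - r ≤ z.re := by
      have := abs_le.mp hre; linarith
    constructor
    · rw [le_div_iff₀ hb0]
      have h1 : Real.exp (-r) * Real.exp z0.re = Real.exp (z0.re - r) := by
        rw [← Real.exp_add]; ring_nf
      have h2 : Real.exp (z0.re - r) ≤ Real.exp z.re := Real.exp_le_exp.mpr hge
      have h3 : Real.exp (-r) ≤ 1 := Real.exp_le_one_iff.mpr (by linarith)
      nlinarith [Real.exp_pos z.re]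
    · rw [div_le_iff₀ hb0]
      have h1 : Real.exp z.re ≤ Real.exp (z0.re + r) := Real.exp_le_exp.mpr hle
      have h2 : Real.exp (z0.re + r) = Real.exp r * Real.exp z0.re := by
        rw [← Real.exp_add]; ring_nf
      have h3 : (1:ℝ) ≤ Real.exp r := Real.one_le_exp hr
      nlinarith [Real.exp_pos z0.re]
  · rintro ⟨c, hc, h⟩
    set r : ℝ := max 1 (Real.log (2 * c)) with hrdef
    have hr : (0:ℝ) < r := lt_of_lt_of_le one_pos (le_max_left _ _)
    have hpi : Real.pi ∈ Set.Icc (0:ℝ) (2 * Real.pi) := by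
      constructor
      · exact Real.pi_pos.le
      · nlinarith [Real.pi_pos]
    have h0 : (0:ℝ) ∈ Set.Icc (0:ℝ) (2 * Real.pi) :=
      ⟨le_refl 0, by positivity⟩
    have := h r hr Real.pi 0 hpi h0
    simp only [Complex.ofReal_zero, zero_mul, Complex.exp_zero, mul_one,
      Complex.exp_pi_mul_I, Complex.norm_exp] at this
    have hre1 : ((r:ℂ)).re = r := Complex.ofReal_re r
    have hre2 : ((r:ℂ) * (-1)).re = -r := by simp
    rw [hre1, hre2] at this
    have hexpr : 2 * c ≤ Real.exp r := by
      calc 2 * c = Real.exp (Real.log (2 * c)) := (Real.exp_log (by linarith)).symm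
        _ ≤ Real.exp r := Real.exp_le_exp.mpr (le_max_right _ _)
    have hneg : Real.exp (-r) ≤ 1 := Real.exp_le_one_iff.mpr (by linarith)
    have hd : (0:ℝ) < Real.exp (-r) + 1 := by positivity
    rw [div_le_iff₀ hd] at this
    nlinarith [Real.exp_pos (-r)]
end

section
/- The entire function F(z_1,z_2) = exp(z_1 z_2) has bounded L-index in joint variables equal to 0 for L(z_1,z_2) = (|z_2|+1, |z_1|+1), i.e., for every multi-index J = (j_1,j_2) ∈ Z_+^2 and every (z_1,z_2) ∈ C^2, |∂^{j_1+j_2}F/∂z_1^{j_1}∂z_2^{j_2}(z_1,z_2)| / (j_1! j_2! (|z_2|+1)^{j_1}(|z_1|+1)^{j_2}) ≤ |F(z_1,z_2)|. -/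
/-- Mixed partial derivative `F^{(K)}` for a multi-index `K`. -/
noncomputable def md {n : ℕ} (K : Fin n → ℕ) (f : (Fin n → ℂ) → ℂ) : (Fin n → ℂ) → ℂ :=
  (List.finRange n).foldr (fun j g => (pd j)^[K j] g) f

lemma pd_apply {n : ℕ} (m : Fin n) (f : (Fin n → ℂ) → ℂ) (z : Fin n → ℂ) :
    pd m f z = deriv (fun w => f (Function.update z m w)) (z m) := rfl

lemma iterA (a : ℕ) (z : Fin 2 → ℂ) :
    (pd (1 : Fin 2))^[a] (fun w : Fin 2 → ℂ => Complex.exp (w 0 * w 1)) z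
      = (z 0) ^ a * Complex.exp (z 0 * z 1) := by
  induction a generalizing z with
  | zero => simp
  | succ a ih =>
    rw [Function.iterate_succ_apply', pd_apply]
    have hfun : (fun w => (pd (1:Fin 2))^[a] (fun w : Fin 2 → ℂ => Complex.exp (w 0 * w 1)) (Function.update z 1 w))
        = fun w => (z 0) ^ a * Complex.exp (z 0 * w) := by
      funext w
      rw [ih]
      simp
    rw [hfun]
    have h : HasDerivAt (fun w => (z 0) ^ a * Complex.exp (z 0 * w))
        ((z 0) ^ a * (z 0 * Complex.exp (z 0 * z 1))) (z 1) := by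
      have h := (Complex.hasDerivAt_exp (z 0 * z 1)).comp (z 1) ((hasDerivAt_id (z 1)).const_mul (z 0))
      simpa [mul_comm] using h.const_mul ((z 0)^a)
    rw [h.deriv]; ring

lemma key_s7 (a m : ℕ) (x y E : ℂ) :
    (∑ k ∈ Finset.range (m+1),
      (((m.choose k * a.descFactorial k : ℕ):ℂ) * (((a - k : ℕ):ℂ) * x^(a-k-1)) * y^(m-k) * E
       + ((m.choose k * a.descFactorial k : ℕ):ℂ) * x^(a-k) * y^(m-k) * (E * y)))
    = ∑ k ∈ Finset.range (m+2),
        ((((m+1).choose k * a.descFactorial k : ℕ):ℂ) * x^(a-k) * y^(m+1-k) * E) := by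
  rw [Finset.sum_add_distrib]
  have h1 : (∑ k ∈ Finset.range (m+1),
      (((m.choose k * a.descFactorial k : ℕ):ℂ) * (((a - k : ℕ):ℂ) * x^(a-k-1)) * y^(m-k) * E))
      = ∑ k ∈ Finset.range (m+1),
      (((m.choose k * a.descFactorial (k+1) : ℕ):ℂ) * x^(a-(k+1)) * y^(m-k) * E) := by
    apply Finset.sum_congr rfl
    intro k _
    have : a - (k+1) = a - k - 1 := by omega
    rw [this, Nat.descFactorial_succ]
    push_cast
    ring
  have h2 : (∑ k ∈ Finset.range (m+1),
      ((m.choose k * a.descFactorial k : ℕ):ℂ) * x^(a-k) * y^(m-k) * (E * y))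
      = ∑ k ∈ Finset.range (m+1),
      ((m.choose k * a.descFactorial k : ℕ):ℂ) * x^(a-k) * y^(m+1-k) * E := by
    apply Finset.sum_congr rfl
    intro k hk
    have hk' : k ≤ m := by simpa [Nat.lt_succ_iff] using hk
    have : m + 1 - k = (m - k) + 1 := by omega
    rw [this, pow_succ]
    ring
  rw [h1, h2]
  rw [Finset.sum_range_succ' (fun k => (((m+1).choose k * a.descFactorial k : ℕ):ℂ) * x^(a-k) * y^(m+1-k) * E) (m+1)]
  have h3 : (∑ k ∈ Finset.range (m+1),
      (((m+1).choose (k+1) * a.descFactorial (k+1) : ℕ):ℂ) * x^(a-(k+1)) * y^(m+1-(k+1)) * E)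
      = ∑ k ∈ Finset.range (m+1),
      ((((m.choose k * a.descFactorial (k+1) : ℕ):ℂ) * x^(a-(k+1)) * y^(m-k) * E)
       + (((m.choose (k+1) * a.descFactorial (k+1) : ℕ):ℂ) * x^(a-(k+1)) * y^(m-k) * E)) := by
    apply Finset.sum_congr rfl
    intro k _
    have : m + 1 - (k+1) = m - k := by omega
    rw [this, Nat.choose_succ_succ]
    push_cast
    ring
  rw [h3, Finset.sum_add_distrib]
  have h4 : (∑ k ∈ Finset.range (m+1),
      (((m.choose (k+1) * a.descFactorial (k+1) : ℕ):ℂ) * x^(a-(k+1)) * y^(m-k) * E))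
      + (((m+1).choose 0 * a.descFactorial 0 : ℕ):ℂ) * x^(a-0) * y^(m+1-0) * E
      = ∑ k ∈ Finset.range (m+1),
      ((m.choose k * a.descFactorial k : ℕ):ℂ) * x^(a-k) * y^(m+1-k) * E := by
    rw [Finset.sum_range_succ' (fun k => ((m.choose k * a.descFactorial k : ℕ):ℂ) * x^(a-k) * y^(m+1-k) * E) m]
    congr 1
    rw [Finset.sum_range_succ]
    simp only [Nat.choose_succ_self, Nat.zero_mul, Nat.cast_zero, zero_mul, add_zero]
    apply Finset.sum_congr rfl
    intro k hk
    have : m + 1 - (k+1) = m - k := by omega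
    rw [this]
    simp
  rw [add_assoc, h4]

lemma iterB (a m : ℕ) (z : Fin 2 → ℂ) :
    (pd (0 : Fin 2))^[m] (fun w : Fin 2 → ℂ => (w 0) ^ a * Complex.exp (w 0 * w 1)) z
      = ∑ k ∈ Finset.range (m+1),
          ((m.choose k * a.descFactorial k : ℕ) : ℂ) * (z 0)^(a - k) * (z 1)^(m - k)
            * Complex.exp (z 0 * z 1) := by
  induction m generalizing z with
  | zero => simp
  | succ m ih =>
    rw [Function.iterate_succ_apply', pd_apply]
    have hfun : (fun w => (pd (0:Fin 2))^[m] (fun w : Fin 2 → ℂ => (w 0) ^ a * Complex.exp (w 0 * w 1)) (Function.update z 0 w))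
        = fun w => ∑ k ∈ Finset.range (m+1),
            ((m.choose k * a.descFactorial k : ℕ) : ℂ) * w^(a - k) * (z 1)^(m - k)
              * Complex.exp (w * z 1) := by
      funext w
      rw [ih]
      simp
    rw [hfun]
    have hder : HasDerivAt (fun w => ∑ k ∈ Finset.range (m+1),
            ((m.choose k * a.descFactorial k : ℕ) : ℂ) * w^(a - k) * (z 1)^(m - k)
              * Complex.exp (w * z 1))
        (∑ k ∈ Finset.range (m+1),
            (((m.choose k * a.descFactorial k : ℕ) : ℂ) * (((a - k : ℕ) : ℂ) * (z 0)^(a - k - 1)) * (z 1)^(m - k)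
              * Complex.exp (z 0 * z 1)
            + ((m.choose k * a.descFactorial k : ℕ) : ℂ) * (z 0)^(a - k) * (z 1)^(m - k)
              * (Complex.exp (z 0 * z 1) * z 1))) (z 0) := by
      apply HasDerivAt.fun_sum
      intro k _
      have hexp : HasDerivAt (fun w : ℂ => Complex.exp (w * z 1))
          (Complex.exp (z 0 * z 1) * z 1) (z 0) :=
        (Complex.hasDerivAt_exp (z 0 * z 1)).comp (z 0) (hasDerivAt_mul_const (z 1))
      have hpoly : HasDerivAt (fun w : ℂ =>
          ((m.choose k * a.descFactorial k : ℕ) : ℂ) * w^(a - k) * (z 1)^(m - k))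
          (((m.choose k * a.descFactorial k : ℕ) : ℂ) * (((a - k : ℕ) : ℂ) * (z 0)^(a - k - 1)) * (z 1)^(m - k)) (z 0) :=
        (((hasDerivAt_pow (a-k) (z 0)).const_mul _).mul_const _)
      simpa [mul_comm, mul_assoc, mul_left_comm] using hpoly.fun_mul hexp
    rw [hder.deriv, key_s7 a m (z 0) (z 1) (Complex.exp (z 0 * z 1))]

/-- `F(z₁,z₂) = exp(z₁ z₂)` has bounded `L`-index in joint variables equal to `0`
for `L(z₁,z₂) = (|z₂|+1, |z₁|+1)`: for every multi-index `J` and every point `z`,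
`|F^{(J)}(z)| / (J! L^J(z)) ≤ |F(z)|`. -/
theorem stmt7 (J : Fin 2 → ℕ) (z : Fin 2 → ℂ) :
    ‖md J (fun w : Fin 2 → ℂ => Complex.exp (w 0 * w 1)) z‖ /
      ((Nat.factorial (J 0) : ℝ) * (Nat.factorial (J 1)) *
        (‖z 1‖ + 1) ^ (J 0) * (‖z 0‖ + 1) ^ (J 1)) ≤
    ‖Complex.exp (z 0 * z 1)‖ := by
  set a := J 1 with ha
  set m := J 0 with hm
  have hmd : md J (fun w : Fin 2 → ℂ => Complex.exp (w 0 * w 1)) z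
      = ∑ k ∈ Finset.range (m+1),
          ((m.choose k * a.descFactorial k : ℕ) : ℂ) * (z 0)^(a - k) * (z 1)^(m - k)
            * Complex.exp (z 0 * z 1) := by
    have h0 : md J (fun w : Fin 2 → ℂ => Complex.exp (w 0 * w 1))
        = (pd 0)^[J 0] ((pd 1)^[J 1] (fun w : Fin 2 → ℂ => Complex.exp (w 0 * w 1))) := by
      simp [md, List.finRange]
    rw [h0]
    have h1 : (pd (1:Fin 2))^[J 1] (fun w : Fin 2 → ℂ => Complex.exp (w 0 * w 1))
        = fun w : Fin 2 → ℂ => (w 0) ^ a * Complex.exp (w 0 * w 1) := by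
      funext w; exact iterA a w
    rw [h1, iterB a m z]
  rw [hmd]
  set r0 := ‖z 0‖ with hr0
  set r1 := ‖z 1‖ with hr1
  set E := ‖Complex.exp (z 0 * z 1)‖ with hE
  have hr0n : (0:ℝ) ≤ r0 := norm_nonneg _
  have hr1n : (0:ℝ) ≤ r1 := norm_nonneg _
  have hEn : (0:ℝ) ≤ E := norm_nonneg _
  have habs : ‖∑ k ∈ Finset.range (m+1),
          ((m.choose k * a.descFactorial k : ℕ) : ℂ) * (z 0)^(a - k) * (z 1)^(m - k)
            * Complex.exp (z 0 * z 1)‖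
      ≤ ∑ k ∈ Finset.range (m+1),
          ((m.choose k * a.descFactorial k : ℕ) : ℝ) * r0^(a - k) * r1^(m - k) * E := by
    refine le_trans (norm_sum_le _ _) (le_of_eq ?_)
    apply Finset.sum_congr rfl
    intro k _
    simp [norm_mul, norm_pow, Complex.norm_natCast, hr0, hr1, hE]
  have hterm : ∀ k ∈ Finset.range (m+1),
      ((m.choose k * a.descFactorial k : ℕ) : ℝ) * r0^(a - k) * r1^(m - k) * E
      ≤ (m.choose k : ℝ) * r1^(m - k) * ((a.factorial : ℝ) * (r0+1)^a * E) := by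
    intro k _
    have h1 : ((a.descFactorial k : ℕ) : ℝ) ≤ (a.factorial : ℝ) := by
      have hnat : a.descFactorial k ≤ a.factorial := by
        rcases le_or_gt k a with h | h
        · calc a.descFactorial k ≤ (a-k).factorial * a.descFactorial k :=
              Nat.le_mul_of_pos_left _ (Nat.factorial_pos _)
            _ = a.factorial := Nat.factorial_mul_descFactorial h
        · rw [Nat.descFactorial_eq_zero_iff_lt.mpr h]; exact Nat.zero_le _
      exact_mod_cast hnat
    have h2 : r0^(a-k) ≤ (r0+1)^a := by
      calc r0^(a-k) ≤ (r0+1)^(a-k) := by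
            apply pow_le_pow_left₀ hr0n (by linarith)
        _ ≤ (r0+1)^a := by
            apply pow_le_pow_right₀ (by linarith) (Nat.sub_le a k)
    calc ((m.choose k * a.descFactorial k : ℕ) : ℝ) * r0^(a - k) * r1^(m - k) * E
        = (m.choose k : ℝ) * ((a.descFactorial k : ℝ) * r0^(a-k)) * r1^(m-k) * E := by
          push_cast; ring
      _ ≤ (m.choose k : ℝ) * ((a.factorial : ℝ) * (r0+1)^a) * r1^(m-k) * E := by
          have hle : ((a.descFactorial k : ℝ) * r0^(a-k)) ≤ ((a.factorial : ℝ) * (r0+1)^a) := by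
            apply mul_le_mul h1 h2 (by positivity) (by positivity)
          have := mul_le_mul_of_nonneg_right (mul_le_mul_of_nonneg_left hle
            (by positivity : (0:ℝ) ≤ (m.choose k : ℝ))) (by positivity : (0:ℝ) ≤ r1^(m-k))
          exact mul_le_mul_of_nonneg_right this hEn
      _ = (m.choose k : ℝ) * r1^(m - k) * ((a.factorial : ℝ) * (r0+1)^a * E) := by ring
  have hsum2 : ∑ k ∈ Finset.range (m+1),
      (m.choose k : ℝ) * r1^(m - k) * ((a.factorial : ℝ) * (r0+1)^a * E)
      = (1 + r1)^m * ((a.factorial : ℝ) * (r0+1)^a * E) := by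
    rw [← Finset.sum_mul]
    congr 1
    rw [add_pow]
    apply Finset.sum_congr rfl
    intro k _
    simp [mul_comm]
  have hfinal : ‖∑ k ∈ Finset.range (m+1),
          ((m.choose k * a.descFactorial k : ℕ) : ℂ) * (z 0)^(a - k) * (z 1)^(m - k)
            * Complex.exp (z 0 * z 1)‖
      ≤ (1 + r1)^m * ((a.factorial : ℝ) * (r0+1)^a * E) := by
    refine le_trans habs (le_trans (Finset.sum_le_sum hterm) (le_of_eq hsum2))
  have hD : (0:ℝ) < (m.factorial : ℝ) * (a.factorial : ℝ) * (r1 + 1)^m * (r0 + 1)^a := by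
    positivity
  rw [div_le_iff₀ hD]
  calc ‖_‖ ≤ (1 + r1)^m * ((a.factorial : ℝ) * (r0+1)^a * E) := hfinal
    _ ≤ (m.factorial : ℝ) * ((1 + r1)^m * ((a.factorial : ℝ) * (r0+1)^a * E)) := by
        apply le_mul_of_one_le_left (by positivity)
        exact_mod_cast Nat.one_le_iff_ne_zero.mpr (Nat.factorial_ne_zero m)
    _ = E * ((m.factorial : ℝ) * (a.factorial : ℝ) * (r1 + 1)^m * (r0 + 1)^a) := by
        rw [add_comm (1:ℝ) r1]; ring
end

section
/- Let l : C → R_+ be a positive continuous function in Q^1 ∩ K^1 and let f be entire of bounded l-index. Then ln max{ |f(z)| : |z| = r } = O( min over θ ∈ [0,2π] of ∫_0^r l(t e^{iθ}) dt ) as r → ∞. -/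
/-- `f` has bounded `l`-index: there is `m` such that for all `p` and `z`,
`|f^{(p)}(z)|/(l(z)^p p!) ≤ max_{0 ≤ s ≤ m} |f^{(s)}(z)|/(l(z)^s s!)`. -/
def boundedIndex (l : ℂ → ℝ) (f : ℂ → ℂ) : Prop :=
  ∃ m : ℕ, ∀ (p : ℕ) (z : ℂ),
    ‖iteratedDeriv p f z‖ / (l z ^ p * p.factorial) ≤
      sSup {x : ℝ | ∃ s ≤ m,
        x = ‖iteratedDeriv s f z‖ / (l z ^ s * s.factorial)}

lemma aux_choose_le_two_pow (n k : ℕ) : (n.choose k : ℝ) ≤ 2 ^ n := by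
  have h : n.choose k ≤ 2 ^ n := by
    rcases le_or_gt k n with hk | hk
    · calc n.choose k ≤ ∑ m ∈ Finset.range (n+1), n.choose m :=
            Finset.single_le_sum (fun i _ => Nat.zero_le _)
              (Finset.mem_range.mpr (Nat.lt_succ_of_le hk))
      _ = 2 ^ n := Nat.sum_range_choose n
    · simp [Nat.choose_eq_zero_of_lt hk]
  exact_mod_cast h

lemma aux_entire_iter {f : ℂ → ℂ} (hf : Differentiable ℂ f) (s : ℕ) :
    Differentiable ℂ (iteratedDeriv s f) :=
  (hf.contDiff (n := ⊤)).differentiable_iteratedDeriv s (by exact_mod_cast WithTop.coe_lt_top _)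

lemma aux_iter_iter {f : ℂ → ℂ} (p s : ℕ) (z : ℂ) :
    iteratedDeriv p (iteratedDeriv s f) z = iteratedDeriv (p + s) f z := by
  simp [iteratedDeriv_eq_iterate, Function.iterate_add_apply]

lemma aux_step (l : ℂ → ℝ) (hpos : ∀ z, 0 < l z)
    (f : ℂ → ℂ) (hf : Differentiable ℂ f) (N : ℕ) (G : ℂ → ℝ)
    (hGnn : ∀ z, 0 ≤ G z)
    (hGle : ∀ p z, ‖iteratedDeriv p f z‖ ≤ G z * (l z ^ p * p.factorial))
    (hGsup : ∀ z B, (∀ s, s ≤ N → ‖iteratedDeriv s f z‖ / (l z ^ s * s.factorial) ≤ B) → G z ≤ B)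
    (m : ℝ) (hm : 0 < m) (hm1 : m ≤ 1)
    (z0 z : ℂ) (hdist : ‖z - z0‖ ≤ (1/4) / l z0)
    (hlz : m * l z0 ≤ l z) :
    G z ≤ (2 * (2/m) ^ N) * G z0 := by
  have hl0 : 0 < l z0 := hpos z0
  have hlz' : 0 < l z := hpos z
  apply hGsup
  intro s hs
  have hsum := Complex.hasSum_taylorSeries_of_entire (aux_entire_iter hf s) z0 z
  set F : ℕ → ℂ := fun p => (p.factorial : ℂ)⁻¹ • (z - z0) ^ p • iteratedDeriv p (iteratedDeriv s f) z0 with hF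
  set A : ℝ := G z0 * l z0 ^ s * s.factorial * 2 ^ s with hA
  have hAnn : 0 ≤ A := by
    rw [hA]
    exact mul_nonneg (mul_nonneg (mul_nonneg (hGnn z0) (by positivity)) (by positivity)) (by positivity)
  set b : ℕ → ℝ := fun p => A * (1/2) ^ p with hb
  have hnorm : ∀ p, ‖F p‖ ≤ b p := by
    intro p
    have hfact : (((p+s).factorial : ℕ) : ℝ) = ((p+s).choose s) * s.factorial * p.factorial := by
      have h := Nat.choose_mul_factorial_mul_factorial (show s ≤ p + s by omega)
      have h2 : p + s - s = p := by omega
      rw [h2] at h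
      exact_mod_cast h.symm
    have h1 : ‖F p‖ = (p.factorial : ℝ)⁻¹ * ((‖z - z0‖) ^ p *
        ‖iteratedDeriv (p + s) f z0‖) := by
      rw [hF]
      simp [norm_smul, aux_iter_iter, mul_assoc]
    rw [h1]
    calc (p.factorial : ℝ)⁻¹ * ((‖z - z0‖) ^ p *
        ‖iteratedDeriv (p + s) f z0‖)
        ≤ (p.factorial : ℝ)⁻¹ * (((1/4) / l z0) ^ p *
          (G z0 * (l z0 ^ (p+s) * (p+s).factorial))) := by
          refine mul_le_mul_of_nonneg_left ?_ (by positivity)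
          exact mul_le_mul (pow_le_pow_left₀ (norm_nonneg _) hdist p)
            (hGle (p+s) z0) (norm_nonneg _)
            (le_of_lt (pow_pos (div_pos (by norm_num) hl0) p))
      _ = G z0 * l z0 ^ s * s.factorial * ((p+s).choose s) * (1/4) ^ p := by
          rw [hfact, pow_add]
          have hp : ((p.factorial : ℕ) : ℝ) ≠ 0 := by positivity
          field_simp
          rw [show (1 / (4 * l z0)) ^ p * G z0 * l z0 ^ p = (1 / (4 * l z0) * l z0) ^ p * G z0 by ring,
            show 1 / (4 * l z0) * l z0 = 1 / 4 by field_simp]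
          ring
      _ ≤ G z0 * l z0 ^ s * s.factorial * (2 ^ (p+s)) * (1/4) ^ p := by
          gcongr
          · have := hGnn z0
            positivity
          · exact aux_choose_le_two_pow (p+s) s
      _ = b p := by
          have h22 : (2:ℝ) ^ p * (1/2:ℝ) ^ p = 1 := by
            rw [← mul_pow]; norm_num
          have h14 : ((1:ℝ)/4) ^ p = (1/2:ℝ) ^ p * (1/2:ℝ) ^ p := by
            rw [← mul_pow]; norm_num
          rw [hb, hA, pow_add, h14]
          calc G z0 * l z0 ^ s * ↑s.factorial * (2 ^ p * 2 ^ s) * ((1/2:ℝ)^p * (1/2:ℝ)^p)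
              = (2 ^ p * (1/2:ℝ)^p) * (G z0 * l z0 ^ s * ↑s.factorial * 2 ^ s * (1/2:ℝ)^p) := by ring
            _ = G z0 * l z0 ^ s * ↑s.factorial * 2 ^ s * (1 / 2) ^ p := by rw [h22]; ring
  have hbsum : Summable b := (summable_geometric_of_lt_one (by norm_num) (by norm_num)).mul_left A
  have hFsum : Summable (fun p => ‖F p‖) :=
    Summable.of_nonneg_of_le (fun p => norm_nonneg _) hnorm hbsum
  have htsum_b : ∑' p, b p = A * 2 := by
    rw [hb]
    rw [tsum_mul_left, tsum_geometric_of_lt_one (by norm_num) (by norm_num)]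
    norm_num
  have hbound : ‖iteratedDeriv s f z‖ ≤ A * 2 := by
    calc ‖iteratedDeriv s f z‖ = ‖∑' p, F p‖ := by
          rw [hsum.tsum_eq]
      _ ≤ ∑' p, ‖F p‖ := norm_tsum_le_tsum_norm hFsum
      _ ≤ ∑' p, b p := Summable.tsum_le_tsum hnorm hFsum hbsum
      _ = A * 2 := htsum_b
  have hden : 0 < l z ^ s * (s.factorial : ℝ) :=
    mul_pos (pow_pos hlz' s) (by exact_mod_cast s.factorial_pos)
  rw [div_le_iff₀ hden]
  have h2m : (1:ℝ) ≤ 2/m := by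
    rw [le_div_iff₀ hm]; linarith
  have hpow : (2/m) ^ s ≤ (2/m) ^ N := pow_le_pow_right₀ h2m hs
  have hls : m ^ s * l z0 ^ s ≤ l z ^ s := by
    rw [← mul_pow]
    exact pow_le_pow_left₀ (by positivity) hlz s
  have key : (2:ℝ) ^ s * l z0 ^ s ≤ (2/m) ^ N * l z ^ s := by
    calc (2:ℝ) ^ s * l z0 ^ s = (2/m) ^ s * (m ^ s * l z0 ^ s) := by
          rw [← mul_assoc, ← mul_pow (2/m), div_mul_cancel₀ _ hm.ne']
      _ ≤ (2/m) ^ N * (l z ^ s) := by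
          exact mul_le_mul hpow hls (by positivity) (le_trans (by positivity) hpow)
  calc ‖iteratedDeriv s f z‖ ≤ A * 2 := hbound
    _ = (G z0 * ↑s.factorial * 2) * (2 ^ s * l z0 ^ s) := by rw [hA]; ring
    _ ≤ (G z0 * ↑s.factorial * 2) * ((2/m) ^ N * l z ^ s) := by
        refine mul_le_mul_of_nonneg_left key ?_
        exact mul_nonneg (mul_nonneg (hGnn z0) (by positivity)) (by norm_num)
    _ = 2 * (2/m) ^ N * G z0 * (l z ^ s * ↑s.factorial) := by ring

lemma aux_ray (l : ℂ → ℝ) (hpos : ∀ z, 0 < l z) (hcont : Continuous l)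
    (G : ℂ → ℝ) (hGnn : ∀ z, 0 ≤ G z)
    (m K : ℝ) (hm : 0 < m) (hK1 : 1 ≤ K)
    (hQm : ∀ z0 z2 : ℂ, ‖z2 - z0‖ ≤ (1/4) / l z0 → m * l z0 ≤ l z2)
    (hstep : ∀ z0 z2 : ℂ, ‖z2 - z0‖ ≤ (1/4) / l z0 → G z2 ≤ K * G z0)
    (θ : ℝ) :
    ∀ n : ℕ, ∀ t : ℝ, 0 ≤ t →
      (∫ s in (0:ℝ)..t, l ((s:ℂ) * Complex.exp ((θ:ℂ) * Complex.I))) ≤ n * (m/4) →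
      G ((t : ℂ) * Complex.exp ((θ:ℂ) * Complex.I)) ≤ G 0 * K ^ n := by
  set e := Complex.exp ((θ:ℂ) * Complex.I) with he
  have habse : ‖e‖ = 1 := by
    rw [he, Complex.norm_exp]
    simp
  have habs : ∀ a b : ℝ, ‖(a:ℂ) * e - (b:ℂ) * e‖ = |a - b| := by
    intro a b
    rw [show (a:ℂ) * e - (b:ℂ) * e = ((a - b : ℝ):ℂ) * e by push_cast; ring,
      norm_mul, Complex.norm_real, Real.norm_eq_abs, habse, mul_one]
  have hLc : Continuous (fun s : ℝ => l ((s:ℂ) * e)) :=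
    hcont.comp ((Complex.continuous_ofReal.mul continuous_const))
  have hInt : ∀ a b : ℝ, IntervalIntegrable (fun s : ℝ => l ((s:ℂ) * e)) MeasureTheory.volume a b :=
    fun a b => hLc.intervalIntegrable a b
  have hzero : ((0:ℝ):ℂ) * e = 0 := by simp
  intro n
  induction n with
  | zero =>
    intro t ht hint
    rcases eq_or_lt_of_le ht with h | h
    · rw [← h, hzero]
      simp
    · exfalso
      have hpos' : 0 < ∫ s in (0:ℝ)..t, l ((s:ℂ) * e) :=
        intervalIntegral.intervalIntegral_pos_of_pos_on (hInt 0 t) (fun x _ => hpos _) h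
      simp only [Nat.cast_zero, zero_mul] at hint
      linarith
  | succ n ih =>
    intro t ht hint
    by_cases hc : t ≤ (1/4) / l 0
    · have h1 : ‖(t:ℂ) * e - ((0:ℝ):ℂ) * e‖ ≤ (1/4) / l 0 := by
        rw [habs]
        simpa [abs_of_nonneg ht] using hc
      rw [hzero] at h1
      have h2 := hstep 0 ((t:ℂ) * e) (by simpa using h1)
      calc G ((t:ℂ) * e) ≤ K * G 0 := h2
        _ ≤ G 0 * K ^ (n+1) := by
            have hKle : K ≤ K ^ (n+1) := le_self_pow₀ (by linarith) (by omega)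
            nlinarith [hGnn (0:ℂ)]
    · push_neg at hc
      set h : ℝ → ℝ := fun s => s + (1/4) / l ((s:ℂ) * e) with hh
      have hhc : ContinuousOn h (Set.Icc 0 t) :=
        (continuous_id.add (continuous_const.div hLc (fun s => (hpos _).ne'))).continuousOn
      have h0 : h 0 = (1/4) / l 0 := by simp [hh, hzero]
      have hht : t ≤ h t := le_add_of_nonneg_right (le_of_lt (div_pos (by norm_num) (hpos _)))
      have hmem : t ∈ Set.Icc (h 0) (h t) := ⟨by rw [h0]; exact hc.le, hht⟩
      obtain ⟨t', ht'mem, ht'eq⟩ := intermediate_value_Icc ht hhc hmem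
      have hg : t - t' = (1/4) / l ((t':ℂ) * e) := by
        have : t' + (1/4) / l ((t':ℂ) * e) = t := ht'eq
        linarith
      have hstep' : G ((t:ℂ) * e) ≤ K * G ((t':ℂ) * e) := by
        apply hstep
        rw [habs, _root_.abs_of_nonneg (show (0:ℝ) ≤ t - t' by linarith [ht'mem.2]), hg]
      have hlow : m/4 ≤ ∫ s in t'..t, l ((s:ℂ) * e) := by
        have hpt : ∀ s ∈ Set.Icc t' t, m * l ((t':ℂ) * e) ≤ l ((s:ℂ) * e) := by
          intro s hsm
          apply hQm
          rw [habs, _root_.abs_of_nonneg (show (0:ℝ) ≤ s - t' by linarith [hsm.1]), ← hg]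
          linarith [hsm.2]
        calc m/4 = (t - t') * (m * l ((t':ℂ) * e)) := by
              rw [hg]
              have hL := (hpos ((t':ℂ) * e)).ne'
              field_simp
          _ = ∫ _ in t'..t, (m * l ((t':ℂ) * e)) := by
              rw [intervalIntegral.integral_const, smul_eq_mul]
          _ ≤ ∫ s in t'..t, l ((s:ℂ) * e) :=
              intervalIntegral.integral_mono_on ht'mem.2 intervalIntegrable_const (hInt t' t) hpt
      have hsplit := intervalIntegral.integral_add_adjacent_intervals (hInt 0 t') (hInt t' t)
      have hint' : (∫ s in (0:ℝ)..t', l ((s:ℂ) * e)) ≤ n * (m/4) := by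
        push_cast at hint
        linarith
      have hih := ih t' ht'mem.1 hint'
      calc G ((t:ℂ) * e) ≤ K * G ((t':ℂ) * e) := hstep'
        _ ≤ K * (G 0 * K ^ n) := mul_le_mul_of_nonneg_left hih (by linarith)
        _ = G 0 * K ^ (n+1) := by ring

set_option maxHeartbeats 1000000 in
/-- If `l ∈ Q^1 ∩ K^1` and `f` is entire of bounded `l`-index, then
`ln max{|f(z)| : |z| = r} = O(min_{θ∈[0,2π]} ∫₀ʳ l(t e^{iθ}) dt)` as `r → ∞`. -/
theorem stmt13 (l : ℂ → ℝ) (hpos : ∀ z, 0 < l z) (hcont : Continuous l)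
    (hQ : inQ1 l) (hK : inK1 l)
    (f : ℂ → ℂ) (hf : Differentiable ℂ f) (hind : boundedIndex l f) :
    ∃ C r₀ : ℝ, 0 < C ∧ ∀ r : ℝ, r₀ ≤ r →
      Real.log (sSup ((fun z => ‖f z‖) '' {z : ℂ | ‖z‖ = r})) ≤
        C * sInf {x : ℝ | ∃ θ ∈ Set.Icc (0:ℝ) (2 * Real.pi),
          x = ∫ t in (0:ℝ)..r, l ((t : ℂ) * Complex.exp ((θ : ℂ) * Complex.I))} := by
  obtain ⟨N, hindN⟩ := hind
  -- the function G
  set G : ℂ → ℝ := fun z => sSup {x : ℝ | ∃ s ≤ N,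
      x = ‖iteratedDeriv s f z‖ / (l z ^ s * s.factorial)} with hG
  have hSeq : ∀ z : ℂ, {x : ℝ | ∃ s ≤ N,
      x = ‖iteratedDeriv s f z‖ / (l z ^ s * s.factorial)} =
      (fun s : ℕ => ‖iteratedDeriv s f z‖ / (l z ^ s * s.factorial)) '' Set.Iic N := by
    intro z
    ext x
    simp only [Set.mem_image, Set.mem_Iic, Set.mem_setOf_eq]
    constructor
    · rintro ⟨s, hs, rfl⟩; exact ⟨s, hs, rfl⟩
    · rintro ⟨s, hs, rfl⟩; exact ⟨s, hs, rfl⟩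
  have hSbdd : ∀ z : ℂ, BddAbove {x : ℝ | ∃ s ≤ N,
      x = ‖iteratedDeriv s f z‖ / (l z ^ s * s.factorial)} := by
    intro z
    rw [hSeq]
    exact ((Set.finite_Iic N).image _).bddAbove
  have hSne : ∀ z : ℂ, Set.Nonempty {x : ℝ | ∃ s ≤ N,
      x = ‖iteratedDeriv s f z‖ / (l z ^ s * s.factorial)} :=
    fun z => ⟨_, 0, Nat.zero_le N, rfl⟩
  have hGmem : ∀ (z : ℂ) (s : ℕ), s ≤ N →
      ‖iteratedDeriv s f z‖ / (l z ^ s * s.factorial) ≤ G z :=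
    fun z s hs => le_csSup (hSbdd z) ⟨s, hs, rfl⟩
  have hGnn : ∀ z, 0 ≤ G z := by
    intro z
    refine le_trans ?_ (hGmem z 0 (Nat.zero_le N))
    have hden : 0 < l z ^ 0 * ((0:ℕ).factorial : ℝ) := by
      simpa using one_pos
    exact div_nonneg (norm_nonneg _) hden.le
  have hGsup : ∀ (z : ℂ) (B : ℝ), (∀ s, s ≤ N →
      ‖iteratedDeriv s f z‖ / (l z ^ s * s.factorial) ≤ B) → G z ≤ B := by
    intro z B hB
    exact csSup_le (hSne z) (by rintro x ⟨s, hs, rfl⟩; exact hB s hs)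
  have hGle : ∀ (p : ℕ) (z : ℂ),
      ‖iteratedDeriv p f z‖ ≤ G z * (l z ^ p * p.factorial) := by
    intro p z
    have h := hindN p z
    have hden : 0 < l z ^ p * (p.factorial : ℝ) :=
      mul_pos (pow_pos (hpos z) p) (by exact_mod_cast p.factorial_pos)
    rw [div_le_iff₀ hden] at h
    exact h
  have hfle : ∀ z : ℂ, ‖f z‖ ≤ G z := by
    intro z
    have h := hGmem z 0 (Nat.zero_le N)
    simpa using h
  -- Q¹ constants for radius 1/4
  obtain ⟨m, M, hm, hQ4⟩ := hQ (1/4) (by norm_num)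
  have hm1 : m ≤ 1 := by
    have h04 : (0:ℝ) ≤ 1/4 / l 0 := (div_pos (by norm_num : (0:ℝ) < 1/4) (hpos 0)).le
    have h := (hQ4 0 0 (by simpa using h04)).1
    rwa [div_self (hpos 0).ne'] at h
  have hQm : ∀ z0 z2 : ℂ, ‖z2 - z0‖ ≤ (1/4) / l z0 → m * l z0 ≤ l z2 := by
    intro z0 z2 hd
    have h := (hQ4 z0 z2 hd).1
    rw [le_div_iff₀ (hpos z0)] at h
    linarith
  set K : ℝ := 2 * (2/m) ^ N with hKdef
  have h2m : (1:ℝ) ≤ 2/m := by rw [le_div_iff₀ hm]; linarith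
  have hK1 : 1 ≤ K := by
    have h := one_le_pow₀ h2m (n := N)
    rw [hKdef]; nlinarith
  have hKpos : 0 < K := lt_of_lt_of_le one_pos hK1
  have hstep : ∀ z0 z2 : ℂ, ‖z2 - z0‖ ≤ (1/4) / l z0 → G z2 ≤ K * G z0 :=
    fun z0 z2 hd => aux_step l hpos f hf N G hGnn hGle hGsup m hm hm1 z0 z2 hd (hQm z0 z2 hd)
  have hray := aux_ray l hpos hcont G hGnn m K hm hK1 hQm hstep
  -- K¹ constant
  obtain ⟨c, hc, hKc⟩ := hK
  have hπ : (0:ℝ) < 2 * Real.pi := by positivity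
  have h0mem : (0:ℝ) ∈ Set.Icc (0:ℝ) (2 * Real.pi) := ⟨le_refl 0, hπ.le⟩
  have hc1 : 1 ≤ c := by
    have h := hKc 1 one_pos 0 0 h0mem h0mem
    rwa [div_self (hpos _).ne'] at h
  -- Q¹ constants for radius 1, and the lower bound scale T
  obtain ⟨m1, M1, hm1', hQ1⟩ := hQ 1 zero_le_one
  have hM1 : 1 ≤ M1 := by
    have h01 : (0:ℝ) ≤ 1 / l 0 := (div_pos one_pos (hpos 0)).le
    have h := (hQ1 0 0 (by simpa using h01)).2
    rwa [div_self (hpos 0).ne'] at h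
  have hM1pos : 0 < M1 := lt_of_lt_of_le one_pos hM1
  set T : ℝ := max (M1 / l 0) 1 with hT
  have hT1 : (1:ℝ) ≤ T := le_max_right _ _
  have hT0 : (0:ℝ) < T := lt_of_lt_of_le one_pos hT1
  have hTl : ∀ z : ℂ, T ≤ ‖z‖ → 1 / ‖z‖ ≤ l z := by
    intro z hz
    have hza : 0 < ‖z‖ := lt_of_lt_of_le hT0 hz
    by_cases hcase : ‖z‖ ≤ 1 / l z
    · have h := (hQ1 z 0 (by simpa using hcase)).2
      rw [div_le_iff₀ (hpos z)] at h
      have h2 : l 0 / M1 ≤ l z := by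
        rw [div_le_iff₀ hM1pos]; linarith
      have h3 : 1 / T ≤ l 0 / M1 := by
        rw [div_le_div_iff₀ hT0 hM1pos, one_mul]
        have h4 : M1 / l 0 ≤ T := le_max_left _ _
        rw [div_le_iff₀ (hpos 0)] at h4
        linarith
      have h4 : 1 / ‖z‖ ≤ 1 / T := one_div_le_one_div_of_le hT0 hz
      linarith
    · push_neg at hcase
      have h := (div_lt_iff₀ (hpos z)).mp hcase
      rw [div_le_iff₀ hza]
      nlinarith
  -- integral basics
  have habs2 : ∀ t θ : ℝ, ‖(t:ℂ) * Complex.exp ((θ:ℂ) * Complex.I)‖ = |t| := by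
    intro t θ
    rw [norm_mul, Complex.norm_real, Real.norm_eq_abs, Complex.norm_exp]
    simp
  have hIint : ∀ (θ : ℝ) (a b : ℝ),
      IntervalIntegrable (fun t : ℝ => l ((t:ℂ) * Complex.exp ((θ:ℂ) * Complex.I)))
        MeasureTheory.volume a b :=
    fun θ a b => (hcont.comp (Complex.continuous_ofReal.mul continuous_const)).intervalIntegrable a b
  have hSmne : ∀ r : ℝ, Set.Nonempty {x : ℝ | ∃ θ ∈ Set.Icc (0:ℝ) (2 * Real.pi),
      x = ∫ t in (0:ℝ)..r, l ((t : ℂ) * Complex.exp ((θ : ℂ) * Complex.I))} :=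
    fun r => ⟨_, 0, h0mem, rfl⟩
  have hInn : ∀ (θ : ℝ) (r : ℝ), 0 ≤ r →
      0 ≤ ∫ t in (0:ℝ)..r, l ((t:ℂ) * Complex.exp ((θ:ℂ) * Complex.I)) :=
    fun θ r hr => intervalIntegral.integral_nonneg hr (fun t _ => (hpos _).le)
  have hImin_nn : ∀ r : ℝ, 0 ≤ r → 0 ≤ sInf {x : ℝ | ∃ θ ∈ Set.Icc (0:ℝ) (2 * Real.pi),
      x = ∫ t in (0:ℝ)..r, l ((t : ℂ) * Complex.exp ((θ : ℂ) * Complex.I))} := by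
    intro r hr
    exact le_csInf (hSmne r) (by rintro x ⟨θ, hθ, rfl⟩; exact hInn θ r hr)
  have hImin_low : ∀ r : ℝ, T ≤ r → Real.log (r / T) ≤
      sInf {x : ℝ | ∃ θ ∈ Set.Icc (0:ℝ) (2 * Real.pi),
        x = ∫ t in (0:ℝ)..r, l ((t : ℂ) * Complex.exp ((θ : ℂ) * Complex.I))} := by
    intro r hr
    apply le_csInf (hSmne r)
    rintro x ⟨θ, hθ, rfl⟩
    have h1 : Real.log (r / T) = ∫ t in T..r, 1/t := by
      rw [integral_one_div]
      intro h0
      rw [Set.uIcc_of_le hr] at h0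
      exact absurd h0.1 (not_le.mpr hT0)
    have hint1 : IntervalIntegrable (fun t : ℝ => 1/t) MeasureTheory.volume T r := by
      apply ContinuousOn.intervalIntegrable
      rw [Set.uIcc_of_le hr]
      exact continuousOn_const.div continuousOn_id
        (fun t ht => ne_of_gt (lt_of_lt_of_le hT0 ht.1))
    have h2 : (∫ t in T..r, 1/t) ≤
        ∫ t in T..r, l ((t:ℂ) * Complex.exp ((θ:ℂ) * Complex.I)) := by
      apply intervalIntegral.integral_mono_on hr hint1 (hIint θ T r)
      intro t ht
      have htpos : 0 < t := lt_of_lt_of_le hT0 ht.1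
      have := hTl ((t:ℂ) * Complex.exp ((θ:ℂ) * Complex.I))
        (by rw [habs2, abs_of_pos htpos]; exact ht.1)
      rwa [habs2, abs_of_pos htpos] at this
    have h3 : (∫ t in T..r, l ((t:ℂ) * Complex.exp ((θ:ℂ) * Complex.I))) ≤
        ∫ t in (0:ℝ)..r, l ((t:ℂ) * Complex.exp ((θ:ℂ) * Complex.I)) := by
      have hsplit := intervalIntegral.integral_add_adjacent_intervals
        (hIint θ 0 T) (hIint θ T r)
      have hnn := hInn θ T hT0.le
      linarith
    linarith
  have hper : ∀ θ : ℝ, ∃ θh : ℝ, θh ∈ Set.Icc (0:ℝ) (2 * Real.pi) ∧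
      Complex.exp ((θ:ℂ) * Complex.I) = Complex.exp ((θh:ℂ) * Complex.I) := by
    intro θ
    set θh : ℝ := 2 * Real.pi * Int.fract (θ / (2 * Real.pi)) with hθh
    have hfr0 : (0:ℝ) ≤ Int.fract (θ / (2 * Real.pi)) := Int.fract_nonneg _
    have hfr1 : Int.fract (θ / (2 * Real.pi)) < 1 := Int.fract_lt_one _
    refine ⟨θh, ⟨by positivity, by nlinarith [Real.pi_pos]⟩, ?_⟩
    have hθeq : θ = θh + (⌊θ / (2 * Real.pi)⌋ : ℤ) * (2 * Real.pi) := by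
      rw [hθh, Int.fract]
      have h2π : (2 * Real.pi) ≠ 0 := by positivity
      field_simp
      ring
    have harg : (θ:ℂ) * Complex.I = (θh:ℂ) * Complex.I +
        (⌊θ / (2 * Real.pi)⌋ : ℤ) * (2 * Real.pi * Complex.I) := by
      have : (θ:ℂ) = (θh:ℂ) + (⌊θ / (2 * Real.pi)⌋ : ℤ) * (2 * Real.pi) := by
        exact_mod_cast congrArg (fun x : ℝ => (x:ℂ)) hθeq
      rw [this]
      push_cast
      ring
    rw [harg, Complex.exp_add, Complex.exp_int_mul_two_pi_mul_I, mul_one]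
  have hIle : ∀ (θ : ℝ) (r : ℝ), 0 ≤ r →
      (∫ t in (0:ℝ)..r, l ((t:ℂ) * Complex.exp ((θ:ℂ) * Complex.I))) ≤
      c * sInf {x : ℝ | ∃ θ' ∈ Set.Icc (0:ℝ) (2 * Real.pi),
        x = ∫ t in (0:ℝ)..r, l ((t : ℂ) * Complex.exp ((θ' : ℂ) * Complex.I))} := by
    intro θ r hr
    obtain ⟨θh, hθhmem, hθheq⟩ := hper θ
    have key : ∀ θ' ∈ Set.Icc (0:ℝ) (2 * Real.pi),
        (∫ t in (0:ℝ)..r, l ((t:ℂ) * Complex.exp ((θ:ℂ) * Complex.I))) ≤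
        c * ∫ t in (0:ℝ)..r, l ((t:ℂ) * Complex.exp ((θ':ℂ) * Complex.I)) := by
      intro θ' hθ'
      have hpt : ∀ t ∈ Set.Icc (0:ℝ) r,
          l ((t:ℂ) * Complex.exp ((θ:ℂ) * Complex.I)) ≤
          c * l ((t:ℂ) * Complex.exp ((θ':ℂ) * Complex.I)) := by
        intro t htm
        rcases eq_or_lt_of_le htm.1 with h0 | h0
        · rw [← h0]
          have h00 : ((0:ℝ):ℂ) * Complex.exp ((θ:ℂ) * Complex.I) = 0 := by simp
          have h01 : ((0:ℝ):ℂ) * Complex.exp ((θ':ℂ) * Complex.I) = 0 := by simp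
          rw [h00, h01]
          nlinarith [hpos (0:ℂ)]
        · have h := hKc t h0 θ' θh hθ' hθhmem
          rw [div_le_iff₀ (hpos _)] at h
          rw [hθheq]
          linarith
      calc (∫ t in (0:ℝ)..r, l ((t:ℂ) * Complex.exp ((θ:ℂ) * Complex.I)))
          ≤ ∫ t in (0:ℝ)..r, c * l ((t:ℂ) * Complex.exp ((θ':ℂ) * Complex.I)) :=
            intervalIntegral.integral_mono_on hr (hIint θ 0 r)
              ((hIint θ' 0 r).const_mul c) hpt
        _ = c * ∫ t in (0:ℝ)..r, l ((t:ℂ) * Complex.exp ((θ':ℂ) * Complex.I)) :=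
            intervalIntegral.integral_const_mul c _
    have h2 : (∫ t in (0:ℝ)..r, l ((t:ℂ) * Complex.exp ((θ:ℂ) * Complex.I))) / c ≤
        sInf {x : ℝ | ∃ θ' ∈ Set.Icc (0:ℝ) (2 * Real.pi),
          x = ∫ t in (0:ℝ)..r, l ((t : ℂ) * Complex.exp ((θ' : ℂ) * Complex.I))} := by
      apply le_csInf (hSmne r)
      rintro x ⟨θ', hθ', rfl⟩
      rw [div_le_iff₀ hc]
      have := key θ' hθ'
      linarith
    calc (∫ t in (0:ℝ)..r, l ((t:ℂ) * Complex.exp ((θ:ℂ) * Complex.I)))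
        = c * ((∫ t in (0:ℝ)..r, l ((t:ℂ) * Complex.exp ((θ:ℂ) * Complex.I))) / c) := by
          rw [mul_div_assoc']; exact (mul_div_cancel_left₀ _ hc.ne').symm
      _ ≤ c * sInf {x : ℝ | ∃ θ' ∈ Set.Icc (0:ℝ) (2 * Real.pi),
          x = ∫ t in (0:ℝ)..r, l ((t : ℂ) * Complex.exp ((θ' : ℂ) * Complex.I))} :=
          mul_le_mul_of_nonneg_left h2 hc.le
  -- main case split on G 0
  by_cases hG00 : G 0 = 0
  · -- f is identically zero
    have hf0 : ∀ z : ℂ, f z = 0 := by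
      intro z
      have hzero : ∀ p : ℕ, iteratedDeriv p f 0 = 0 := by
        intro p
        have h := hGle p 0
        rw [hG00, zero_mul] at h
        have h0 : ‖iteratedDeriv p f 0‖ = 0 :=
          le_antisymm h (norm_nonneg _)
        exact norm_eq_zero.mp h0
      have hsum := Complex.hasSum_taylorSeries_of_entire hf 0 z
      have hsum0 : HasSum (fun _ : ℕ => (0:ℂ)) (f z) := by
        simpa [hzero] using hsum
      simpa using hsum0.unique hasSum_zero
    refine ⟨1, 1, one_pos, ?_⟩
    intro r hr
    have hr0 : (0:ℝ) < r := lt_of_lt_of_le one_pos hr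
    have himg : (fun z => ‖f z‖) '' {z : ℂ | ‖z‖ = r} = {0} := by
      apply Set.eq_singleton_iff_unique_mem.mpr
      constructor
      · exact ⟨(r:ℂ), by simp [Complex.norm_real, Real.norm_eq_abs, abs_of_pos hr0], by simp [hf0]⟩
      · rintro x ⟨z, hz, rfl⟩
        simp [hf0]
    rw [himg, csSup_singleton, Real.log_zero, one_mul]
    exact hImin_nn r hr0.le
  · have hG0pos : 0 < G 0 := lt_of_le_of_ne (hGnn 0) (Ne.symm hG00)
    set A : ℝ := Real.log (G 0) + Real.log K with hA
    set B : ℝ := c * Real.log K / (m/4) with hB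
    have hm4 : (0:ℝ) < m/4 := by linarith
    have hlogK : 0 ≤ Real.log K := Real.log_nonneg hK1
    have hBnn : 0 ≤ B := div_nonneg (mul_nonneg hc.le hlogK) hm4.le
    refine ⟨B + 1, T * Real.exp (max A 1), by linarith, ?_⟩
    intro r hr
    have hexp1 : (1:ℝ) ≤ Real.exp (max A 1) :=
      Real.one_le_exp (le_trans zero_le_one (le_max_right A 1))
    have hrT : T ≤ r := le_trans (le_mul_of_one_le_right hT0.le hexp1) hr
    have hr0 : 0 < r := lt_of_lt_of_le hT0 hrT
    set Imin : ℝ := sInf {x : ℝ | ∃ θ ∈ Set.Icc (0:ℝ) (2 * Real.pi),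
        x = ∫ t in (0:ℝ)..r, l ((t : ℂ) * Complex.exp ((θ : ℂ) * Complex.I))} with hIminDef
    have hIminA : max A 1 ≤ Imin := by
      have hlow := hImin_low r hrT
      have hlog : max A 1 ≤ Real.log (r / T) := by
        rw [Real.le_log_iff_exp_le (div_pos hr0 hT0), le_div_iff₀ hT0]
        calc Real.exp (max A 1) * T = T * Real.exp (max A 1) := by ring
          _ ≤ r := hr
      linarith
    have hIminpos : 0 < Imin :=
      lt_of_lt_of_le one_pos (le_trans (le_max_right A 1) hIminA)
    set Bound : ℝ := G 0 * K ^ (c * Imin / (m/4) + 1 : ℝ) with hBound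
    have hBoundpos : 0 < Bound :=
      mul_pos hG0pos (Real.rpow_pos_of_pos hKpos _)
    have hcirc : ∀ z : ℂ, ‖z‖ = r → ‖f z‖ ≤ Bound := by
      intro z hz
      set θ : ℝ := z.arg with hθ
      have hzeq : ((r:ℝ):ℂ) * Complex.exp ((θ:ℂ) * Complex.I) = z := by
        rw [hθ, ← hz]
        exact Complex.norm_mul_exp_arg_mul_I z
      set Iθ : ℝ := ∫ t in (0:ℝ)..r, l ((t:ℂ) * Complex.exp ((θ:ℂ) * Complex.I)) with hIθ
      have hIθnn : 0 ≤ Iθ := hInn θ r hr0.le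
      set n : ℕ := ⌈Iθ / (m/4)⌉₊ with hn
      have hle1 : Iθ ≤ n * (m/4) := by
        exact (div_le_iff₀ hm4).mp (Nat.le_ceil _)
      have hGz := hray θ n r hr0.le hle1
      rw [hzeq] at hGz
      have h1 : ‖f z‖ ≤ G 0 * K ^ n := le_trans (hfle z) hGz
      have h2 : (K:ℝ) ^ (n:ℕ) ≤ K ^ (c * Imin / (m/4) + 1 : ℝ) := by
        rw [← Real.rpow_natCast K n]
        apply Real.rpow_le_rpow_of_exponent_le hK1
        have hceil : (n:ℝ) ≤ Iθ/(m/4) + 1 :=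
          (Nat.ceil_lt_add_one (div_nonneg hIθnn hm4.le)).le
        have hIc : Iθ ≤ c * Imin := hIle θ r hr0.le
        have hdd : Iθ/(m/4) ≤ c * Imin/(m/4) := by gcongr
        linarith
      calc ‖f z‖ ≤ G 0 * K ^ n := h1
        _ ≤ Bound := mul_le_mul_of_nonneg_left h2 hG0pos.le
    have hne : Set.Nonempty ((fun z => ‖f z‖) '' {z : ℂ | ‖z‖ = r}) :=
      ⟨_, ⟨(r:ℂ), by simp [Complex.norm_real, Real.norm_eq_abs, abs_of_pos hr0], rfl⟩⟩
    have hsup_le : sSup ((fun z => ‖f z‖) '' {z : ℂ | ‖z‖ = r}) ≤ Bound :=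
      csSup_le hne (by rintro x ⟨z, hz, rfl⟩; exact hcirc z hz)
    have hbddab : BddAbove ((fun z => ‖f z‖) '' {z : ℂ | ‖z‖ = r}) :=
      ⟨Bound, by rintro x ⟨z, hz, rfl⟩; exact hcirc z hz⟩
    have hsup_nn : 0 ≤ sSup ((fun z => ‖f z‖) '' {z : ℂ | ‖z‖ = r}) := by
      refine le_trans (norm_nonneg (f (r:ℂ))) ?_
      exact le_csSup hbddab ⟨(r:ℂ), by simp [Complex.norm_real, Real.norm_eq_abs, abs_of_pos hr0], rfl⟩
    have hlogBound : Real.log Bound ≤ (B + 1) * Imin := by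
      rw [hBound, Real.log_mul hG0pos.ne' (Real.rpow_pos_of_pos hKpos _).ne',
        Real.log_rpow hKpos]
      have hAle : A ≤ Imin := le_trans (le_max_left A 1) hIminA
      have hexpand : (c * Imin / (m/4) + 1) * Real.log K =
          B * Imin + Real.log K := by
        rw [hB]
        field_simp
      rw [hexpand]
      rw [hA] at hAle
      have hdist2 : (B+1)*Imin = B*Imin + Imin := by ring
      linarith
    rcases eq_or_lt_of_le hsup_nn with hsup0 | hsuppos
    · rw [← hsup0, Real.log_zero]
      have h9 := hImin_nn r hr0.le
      rw [← hIminDef] at h9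
      exact mul_nonneg (by linarith : (0:ℝ) ≤ B + 1) h9
    · calc Real.log (sSup ((fun z => ‖f z‖) '' {z : ℂ | ‖z‖ = r}))
          ≤ Real.log Bound := (Real.log_le_log_iff hsuppos hBoundpos).mpr hsup_le
        _ ≤ (B + 1) * Imin := hlogBound
end
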